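/- If G is a finite simple König-Egerváry graph, i.e. its matching number equals its covering number, then the number of maximal independent sets of G equals 2^ν(G) if and only if G is bipartite and its induced matching number equals its matching number (i.e., G is a Cameron-Walker bipartite graph). -/

import Mathlib

variable {V : Type*}

/-- `S` is an independent set of `G`: no two vertices of `S` are adjacent. -/
def IsIndepSet (G : SimpleGraph V) (S : Set V) : Prop :=
  ∀ ⦃u v : V⦄, u ∈ S → v ∈ S → ¬ G.Adj u v

/-- `S` is a maximal independent set of `G`. -/
def IsMaxIndepSet (G : SimpleGraph V) (S : Set V) : Prop :=
  IsIndepSet G S ∧ ∀ T : Set V, IsIndepSet G T → S ⊆ T → S = T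

/-- `m(G)`: the number of maximal independent sets of `G`. -/
noncomputable def numMaxIndep (G : SimpleGraph V) : ℕ :=
  {S : Set V | IsMaxIndepSet G S}.ncard

/-- `C` is a vertex cover of `G`: every edge has at least one endpoint in `C`. -/
def IsVertexCover (G : SimpleGraph V) (C : Set V) : Prop :=
  ∀ ⦃u v : V⦄, G.Adj u v → u ∈ C ∨ v ∈ C

/-- `β(G)`: the minimum size of a vertex cover of `G`. -/
noncomputable def coverNumber (G : SimpleGraph V) : ℕ :=
  sInf {n : ℕ | ∃ C : Set V, IsVertexCover G C ∧ C.ncard = n}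

/-- `M` is a matching of `G`: a set of edges of `G`, pairwise sharing no vertex. -/
def IsMatching (G : SimpleGraph V) (M : Set (Sym2 V)) : Prop :=
  M ⊆ G.edgeSet ∧ ∀ e ∈ M, ∀ f ∈ M, e ≠ f → ∀ v : V, v ∈ e → v ∉ f

/-- `M` is an induced matching of `G`: a matching such that no two distinct
edges of `M` are joined by an edge of `G`. -/
def IsInducedMatching (G : SimpleGraph V) (M : Set (Sym2 V)) : Prop :=
  IsMatching G M ∧ ∀ e ∈ M, ∀ f ∈ M, e ≠ f → ∀ u v : V, u ∈ e → v ∈ f → ¬ G.Adj u v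

/-- `ν(G)`: the maximum size of a matching of `G`. -/
noncomputable def matchingNumber (G : SimpleGraph V) : ℕ :=
  sSup {n : ℕ | ∃ M : Set (Sym2 V), IsMatching G M ∧ M.ncard = n}

/-- `ν₀(G)`: the maximum size of an induced matching of `G`. -/
noncomputable def inducedMatchingNumber (G : SimpleGraph V) : ℕ :=
  sSup {n : ℕ | ∃ M : Set (Sym2 V), IsInducedMatching G M ∧ M.ncard = n}

/-- `G` is bipartite: the vertices split into two sides with every edge crossing. -/
def IsBipartite (G : SimpleGraph V) : Prop :=
  ∃ A : Set V, ∀ ⦃u v : V⦄, G.Adj u v → (u ∈ A ↔ v ∉ A)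



lemma sym2_out_eq (e : Sym2 V) : s(e.out.1, e.out.2) = e := by
  exact e.out_eq

section fin
variable [Fintype V] {G : SimpleGraph V}

lemma exists_maxIndep_superset {S : Set V} (hS : IsIndepSet G S) :
    ∃ T, IsMaxIndepSet G T ∧ S ⊆ T := by
  classical
  obtain ⟨T, hTmem, hmax⟩ := Set.Finite.exists_maximalFor (id : Set V → Set V)
    {T | IsIndepSet G T ∧ S ⊆ T} (Set.toFinite _) ⟨S, hS, subset_rfl⟩
  exact ⟨T, ⟨hTmem.1, fun T' hT' hTT' =>
    hTT'.antisymm (hmax ⟨hT', hTmem.2.trans hTT'⟩ hTT')⟩, hTmem.2⟩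

lemma exists_adj_of_not_mem {S : Set V} (hS : IsMaxIndepSet G S) {x : V} (hx : x ∉ S) :
    ∃ y ∈ S, G.Adj x y := by
  by_contra h
  push_neg at h
  have hindep : IsIndepSet G (insert x S) := by
    intro u v hu hv hadj
    rcases hu with rfl | hu
    · rcases hv with rfl | hv
      · exact G.irrefl hadj
      · exact h v hv hadj
    · rcases hv with rfl | hv
      · exact h u hu (hadj.symm)
      · exact hS.1 hu hv hadj
  have := hS.2 _ hindep (Set.subset_insert x S)
  exact hx (this ▸ Set.mem_insert x S)

end fin

section fin2
variable [Fintype V] {G : SimpleGraph V}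

lemma maxIndep_subset_of_inter_cover_subset {C : Set V} (hC : IsVertexCover G C)
    {S₁ S₂ : Set V} (h₁ : IsMaxIndepSet G S₁) (h₂ : IsMaxIndepSet G S₂)
    (h : S₁ ∩ C = S₂ ∩ C) : S₁ ⊆ S₂ := by
  intro v hv
  by_contra hv2
  by_cases hvC : v ∈ C
  · have : v ∈ S₂ ∩ C := h ▸ (⟨hv, hvC⟩ : v ∈ S₁ ∩ C)
    exact hv2 this.1
  · obtain ⟨y, hyS, hadj⟩ := exists_adj_of_not_mem h₂ hv2
    have hyC : y ∈ C := (hC hadj).resolve_left hvC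
    have : y ∈ S₁ ∩ C := h ▸ (⟨hyS, hyC⟩ : y ∈ S₂ ∩ C)
    exact h₁.1 hv this.1 hadj

lemma maxIndep_inter_cover_injOn {C : Set V} (hC : IsVertexCover G C) :
    Set.InjOn (· ∩ C) {S | IsMaxIndepSet G S} := by
  intro S₁ hS₁ S₂ hS₂ h
  exact (maxIndep_subset_of_inter_cover_subset hC hS₁ hS₂ h).antisymm
    (maxIndep_subset_of_inter_cover_subset hC hS₂ hS₁ h.symm)

end fin2

section fin3
variable [Fintype V] {G : SimpleGraph V}

lemma ncard_powerset (C : Set V) : {T : Set V | T ⊆ C}.ncard = 2 ^ C.ncard := by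
  classical
  have himg : {T : Set V | T ⊆ C}
      = (fun F : Finset V => (↑F : Set V)) '' ↑C.toFinset.powerset := by
    ext T
    simp only [Set.mem_setOf_eq, Set.mem_image, Finset.mem_coe, Finset.mem_powerset]
    constructor
    · intro hT
      refine ⟨T.toFinset, ?_, T.coe_toFinset⟩
      intro x hx
      simpa using hT (by simpa using hx)
    · rintro ⟨F, hF, rfl⟩
      intro x hx
      simpa using hF (by simpa using hx)
  rw [himg, Set.ncard_image_of_injOn (fun a _ b _ h => Finset.coe_injective h),
    Set.ncard_coe_finset, Finset.card_powerset, Set.ncard_eq_toFinset_card']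

lemma numMaxIndep_le_two_pow_cover {C : Set V} (hC : IsVertexCover G C) :
    numMaxIndep G ≤ 2 ^ C.ncard := by
  calc numMaxIndep G = ((· ∩ C) '' {S | IsMaxIndepSet G S}).ncard :=
        (Set.ncard_image_of_injOn (maxIndep_inter_cover_injOn hC)).symm
    _ ≤ {T : Set V | T ⊆ C}.ncard := Set.ncard_le_ncard
        (by rintro _ ⟨S, _, rfl⟩; exact Set.inter_subset_right) (Set.toFinite _)
    _ = 2 ^ C.ncard := ncard_powerset C

lemma exists_maxIndep_inter_eq {C : Set V} (hC : IsVertexCover G C)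
    (heq : numMaxIndep G = 2 ^ C.ncard) {T : Set V} (hT : T ⊆ C) :
    ∃ S, IsMaxIndepSet G S ∧ S ∩ C = T := by
  have himg : (· ∩ C) '' {S | IsMaxIndepSet G S} = {T : Set V | T ⊆ C} := by
    apply Set.eq_of_subset_of_ncard_le
    · rintro _ ⟨S, _, rfl⟩; exact Set.inter_subset_right
    · rw [ncard_powerset, Set.ncard_image_of_injOn (maxIndep_inter_cover_injOn hC)]
      exact heq.ge
    · exact Set.toFinite _
  have : T ∈ (· ∩ C) '' {S | IsMaxIndepSet G S} := himg ▸ hT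
  obtain ⟨S, hS, hST⟩ := this
  exact ⟨S, hS, hST⟩

end fin3

section fin4
variable [Fintype V] {G : SimpleGraph V}

lemma matchingSet_bddAbove :
    BddAbove {n : ℕ | ∃ M : Set (Sym2 V), IsMatching G M ∧ M.ncard = n} := by
  classical
  refine ⟨Nat.card (Sym2 V), ?_⟩
  rintro n ⟨M, _, rfl⟩
  rw [← Set.ncard_univ]
  exact Set.ncard_le_ncard (Set.subset_univ M) Set.finite_univ

lemma matchingSet_nonempty :
    ({n : ℕ | ∃ M : Set (Sym2 V), IsMatching G M ∧ M.ncard = n}).Nonempty :=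
  ⟨0, ∅, ⟨Set.empty_subset _, by simp⟩, by simp⟩

lemma ncard_le_matchingNumber {M : Set (Sym2 V)} (hM : IsMatching G M) :
    M.ncard ≤ matchingNumber G :=
  le_csSup matchingSet_bddAbove ⟨M, hM, rfl⟩

lemma exists_maximum_matching :
    ∃ M : Set (Sym2 V), IsMatching G M ∧ M.ncard = matchingNumber G :=
  Nat.sSup_mem matchingSet_nonempty matchingSet_bddAbove

lemma inducedMatchingNumber_le : inducedMatchingNumber G ≤ matchingNumber G := by
  apply csSup_le_csSup matchingSet_bddAbove
  · exact ⟨0, ∅, ⟨⟨Set.empty_subset _, by simp⟩, by simp⟩, by simp⟩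
  · rintro n ⟨M, hM, rfl⟩
    exact ⟨M, hM.1, rfl⟩

lemma exists_minimum_cover :
    ∃ C : Set V, IsVertexCover G C ∧ C.ncard = coverNumber G := by
  have h : {n : ℕ | ∃ C : Set V, IsVertexCover G C ∧ C.ncard = n}.Nonempty :=
    ⟨Nat.card V, Set.univ, fun u v _ => Or.inl trivial, Set.ncard_univ V⟩
  exact Nat.sInf_mem h

end fin4

section fin5
variable [Fintype V] {G : SimpleGraph V}

lemma inducedSet_bddAbove :
    BddAbove {n : ℕ | ∃ M : Set (Sym2 V), IsInducedMatching G M ∧ M.ncard = n} := by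
  classical
  refine ⟨Nat.card (Sym2 V), ?_⟩
  rintro n ⟨M, _, rfl⟩
  rw [← Set.ncard_univ]
  exact Set.ncard_le_ncard (Set.subset_univ M) Set.finite_univ

lemma exists_maximum_inducedMatching :
    ∃ M : Set (Sym2 V), IsInducedMatching G M ∧ M.ncard = inducedMatchingNumber G := by
  have h : {n : ℕ | ∃ M : Set (Sym2 V), IsInducedMatching G M ∧ M.ncard = n}.Nonempty :=
    ⟨0, ∅, ⟨⟨Set.empty_subset _, by simp⟩, by simp⟩, by simp⟩
  exact Nat.sSup_mem h inducedSet_bddAbove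

lemma forward_dir (hKE : coverNumber G = matchingNumber G)
    (hm : numMaxIndep G = 2 ^ matchingNumber G) :
    IsBipartite G ∧ inducedMatchingNumber G = matchingNumber G := by
  classical
  obtain ⟨C, hC, hCcard⟩ := exists_minimum_cover (G := G)
  have hCν : C.ncard = matchingNumber G := hCcard.trans hKE
  have heq : numMaxIndep G = 2 ^ C.ncard := by rw [hCν]; exact hm
  -- C is independent
  obtain ⟨S₀, hS₀, hS₀C⟩ := exists_maxIndep_inter_eq hC heq (subset_refl C)
  have hCsub : C ⊆ S₀ := fun c hc => by
    have : c ∈ S₀ ∩ C := hS₀C.symm ▸ hc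
    exact this.1
  have hCind : IsIndepSet G C := fun u v hu hv => hS₀.1 (hCsub hu) (hCsub hv)
  -- bipartite with side C
  have hbip : IsBipartite G := by
    refine ⟨C, fun u v hadj => ⟨fun hu hv => hCind hu hv hadj, fun hv => ?_⟩⟩
    exact (hC hadj).resolve_right hv
  -- every cover vertex has a pendant neighbor
  have hleaf : ∀ c ∈ C, ∃ v, G.Adj c v ∧ ∀ u, G.Adj v u → u = c := by
    intro c hc
    obtain ⟨S, hS, hSC⟩ := exists_maxIndep_inter_eq hC heq
      (Set.diff_subset : C \ {c} ⊆ C)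
    have hcS : c ∉ S := by
      intro h
      have : c ∈ C \ {c} := hSC ▸ (⟨h, hc⟩ : c ∈ S ∩ C)
      exact this.2 rfl
    obtain ⟨v, hvS, hadj⟩ := exists_adj_of_not_mem hS hcS
    have hvC : v ∉ C := fun hvC => hCind hc hvC hadj
    refine ⟨v, hadj, fun u hu => ?_⟩
    have huC : u ∈ C := (hC hu).resolve_left hvC
    by_contra hne
    have huS : u ∈ S := by
      have : u ∈ S ∩ C := hSC.symm ▸ (⟨huC, hne⟩ : u ∈ C \ {c})
      exact this.1
    exact hS.1 hvS huS hu
  choose! ℓ hℓadj hℓuniq using hleaf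
  -- the pendant edges form an induced matching of size ν
  have hℓC : ∀ c ∈ C, ℓ c ∉ C := fun c hc h => hCind hc h (hℓadj c hc)
  have hdistinct : ∀ c ∈ C, ∀ c' ∈ C, c ≠ c' →
      c ≠ ℓ c' ∧ ℓ c ≠ c' ∧ ℓ c ≠ ℓ c' := by
    intro c hc c' hc' hne
    refine ⟨fun h => ?_, fun h => ?_, fun h => ?_⟩
    · have := hℓadj c' hc'
      rw [← h] at this
      exact hCind hc' hc this
    · have := hℓadj c hc
      rw [h] at this
      exact hCind hc hc' this
    · have := hℓadj c' hc'
      rw [← h] at this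
      exact hne (hℓuniq c hc c' this.symm).symm
  have hnadj : ∀ c ∈ C, ∀ c' ∈ C, c ≠ c' →
      ∀ x, (x = c ∨ x = ℓ c) → ∀ y, (y = c' ∨ y = ℓ c') → ¬ G.Adj x y := by
    intro c hc c' hc' hne x hx y hy hadj
    rcases hx with rfl | rfl <;> rcases hy with rfl | rfl
    · exact hCind hc hc' hadj
    · exact hne (hℓuniq c' hc' _ hadj.symm)
    · exact hne (hℓuniq c hc _ hadj).symm
    · have h1 : ℓ c' = c := hℓuniq c hc (ℓ c') hadj
      have := hℓadj c' hc'
      rw [h1] at this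
      exact hCind hc' hc this
  -- build the induced matching of pendant edges
  have hinjC : Set.InjOn (fun c => s(c, ℓ c)) C := by
    intro a ha b hb h
    by_contra hne
    rw [Sym2.eq_iff] at h
    rcases h with ⟨h1, _⟩ | ⟨h1, _⟩
    · exact hne h1
    · exact (hdistinct a ha b hb hne).1 h1
  set M : Set (Sym2 V) := (fun c => s(c, ℓ c)) '' C with hMdef
  have hMne : ∀ c ∈ C, ∀ c' ∈ C, s(c, ℓ c) ≠ s(c', ℓ c') → c ≠ c' := by
    intro c hc c' hc' hne h
    exact hne (by rw [h])
  have hMmatch : IsMatching G M := by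
    constructor
    · rintro _ ⟨c, hc, rfl⟩
      exact G.mem_edgeSet.2 (hℓadj c hc)
    · rintro _ ⟨c, hc, rfl⟩ _ ⟨c', hc', rfl⟩ hne v hv hv'
      have hcc : c ≠ c' := hMne c hc c' hc' hne
      rw [Sym2.mem_iff] at hv hv'
      obtain ⟨d1, d2, d3⟩ := hdistinct c hc c' hc' hcc
      rcases hv with rfl | rfl
      · rcases hv' with h | h
        · exact hcc h
        · exact d1 h
      · rcases hv' with h | h
        · exact d2 h
        · exact d3 h
  have hMind : IsInducedMatching G M := by
    refine ⟨hMmatch, ?_⟩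
    rintro _ ⟨c, hc, rfl⟩ _ ⟨c', hc', rfl⟩ hne u v hu hv
    have hcc : c ≠ c' := hMne c hc c' hc' hne
    rw [Sym2.mem_iff] at hu hv
    exact hnadj c hc c' hc' hcc u hu v hv
  have hMcard : M.ncard = C.ncard := Set.ncard_image_of_injOn hinjC
  have h1 : matchingNumber G ≤ inducedMatchingNumber G := by
    rw [← hCν, ← hMcard]
    exact le_csSup inducedSet_bddAbove ⟨M, hMind, rfl⟩
  exact ⟨hbip, le_antisymm inducedMatchingNumber_le h1⟩

end fin5

section fin6
variable [Fintype V] {G : SimpleGraph V}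

lemma backward_dir (hKE : coverNumber G = matchingNumber G)
    (hCW : inducedMatchingNumber G = matchingNumber G) :
    numMaxIndep G = 2 ^ matchingNumber G := by
  classical
  obtain ⟨C, hC, hCcard⟩ := exists_minimum_cover (G := G)
  have hle : numMaxIndep G ≤ 2 ^ matchingNumber G := by
    have := numMaxIndep_le_two_pow_cover hC
    rwa [hCcard, hKE] at this
  obtain ⟨M, hMind, hMcard⟩ := exists_maximum_inducedMatching (G := G)
  have hMν : M.ncard = matchingNumber G := by rw [hMcard, hCW]
  set sel : (M → Bool) → M → V := fun f e =>
    if f e then (e : Sym2 V).out.1 else (e : Sym2 V).out.2 with hsel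
  have hselmem : ∀ f (e : M), sel f e ∈ (e : Sym2 V) := by
    intro f e
    by_cases h : f e <;> simp [hsel, h, Sym2.out_fst_mem, Sym2.out_snd_mem]
  have hindep : ∀ f, IsIndepSet G (Set.range (sel f)) := by
    rintro f u v ⟨e, rfl⟩ ⟨e', rfl⟩ hadj
    by_cases he : e = e'
    · subst he
      exact G.irrefl hadj
    · have hne : (e : Sym2 V) ≠ (e' : Sym2 V) := fun h => he (Subtype.ext h)
      exact hMind.2 e e.2 e' e'.2 hne _ _ (hselmem f e) (hselmem f e') hadj
  choose F hF hFsub using fun f => exists_maxIndep_superset (hindep f)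
  have hFinj : Function.Injective F := by
    intro f g h
    by_contra hfg
    obtain ⟨e, he⟩ := Function.ne_iff.1 hfg
    have hadj : G.Adj (e : Sym2 V).out.1 (e : Sym2 V).out.2 := by
      have hedge := hMind.1.1 e.2
      rw [← sym2_out_eq (e : Sym2 V)] at hedge
      exact G.mem_edgeSet.1 hedge
    have hadj2 : G.Adj (sel f e) (sel g e) := by
      rcases Bool.eq_false_or_eq_true (f e) with hb | hb <;>
        rcases Bool.eq_false_or_eq_true (g e) with hb' | hb'
      · exact absurd (hb.trans hb'.symm) he
      · simpa [hsel, hb, hb'] using hadj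
      · simpa [hsel, hb, hb'] using hadj.symm
      · exact absurd (hb.trans hb'.symm) he
    have h1 : sel f e ∈ F f := hFsub f ⟨e, rfl⟩
    have h2 : sel g e ∈ F g := hFsub g ⟨e, rfl⟩
    rw [h] at h1
    exact (hF g).1 h1 h2 hadj2
  have hge : 2 ^ matchingNumber G ≤ numMaxIndep G := by
    have hr : Set.range F ⊆ {S | IsMaxIndepSet G S} := by
      rintro _ ⟨f, rfl⟩; exact hF f
    have hcard : (Set.range F).ncard = 2 ^ matchingNumber G := by
      rw [← Nat.card_coe_set_eq, Nat.card_range_of_injective hFinj, Nat.card_fun,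
        Nat.card_eq_fintype_card (α := Bool), Fintype.card_bool, Nat.card_coe_set_eq, hMν]
    rw [← hcard]
    exact Set.ncard_le_ncard hr (Set.toFinite _)
  exact le_antisymm hle hge

end fin6


/-- If `G` is a König-Egerváry graph then `m(G) = 2 ^ ν(G)` iff `G`
is a Cameron-Walker bipartite graph. -/
theorem numMaxIndep_eq_two_pow_matchingNumber_iff_of_koenig [Fintype V] (G : SimpleGraph V)
    (hKE : coverNumber G = matchingNumber G) :
    numMaxIndep G = 2 ^ matchingNumber G ↔
      IsBipartite G ∧ inducedMatchingNumber G = matchingNumber G :=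
  ⟨fun hm => forward_dir hKE hm, fun ⟨_, hCW⟩ => backward_dir hKE hCW⟩
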